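/- Let k be a field of characteristic zero and let L ⊆ ℤ[x]^m be a toric ℤ[x]-lattice. Let v_1,…,v_n ∈ ℤ[x]^m be a generating set of the orthogonal complement L^C, and define u_1,…,u_m ∈ ℤ[x]^n by (u_j)_i = (v_i)_j (the u_j are the rows of the matrix with columns v_1,…,v_n). Then the kernel of the monomial substitution homomorphism θ_U : AddMonoidAlgebra k (ℕ[x]^m) → AddMonoidAlgebra k (ℤ[x]^n) determined by θ_U(Y^w) = T^{∑_j w_j·u_j} equals the lattice ideal I_L, the ideal generated by the binomials Y^{f⁺} − Y^{f⁻} for f ∈ L. (Lemma 4.5: every toric difference ideal is the defining ideal of a toric difference variety.) -/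

import Mathlib

open Polynomial AddMonoidAlgebra

/-- The coefficientwise positive part of an integer polynomial, as a polynomial over ℕ. -/
noncomputable def polyPos (p : Polynomial ℤ) : Polynomial ℕ :=
  ⟨AddMonoidAlgebra.ofCoeff (p.toFinsupp.coeff.mapRange Int.toNat Int.toNat_zero)⟩

/-- The coefficientwise positive part of a vector of integer polynomials. -/
noncomputable def vecPos {m : ℕ} (f : Fin m → Polynomial ℤ) : Fin m → Polynomial ℕ :=
  fun i => polyPos (f i)

/-- The coefficientwise negative part of a vector of integer polynomials. -/
noncomputable def vecNeg {m : ℕ} (f : Fin m → Polynomial ℤ) : Fin m → Polynomial ℕ :=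
  fun i => polyPos (-(f i))

/-- The additive monoid homomorphism `ℕ[x]^m →+ ℤ[x]^n`, `w ↦ ∑ i, w i • u i`. -/
noncomputable def expMap {m n : ℕ} (u : Fin m → Fin n → Polynomial ℤ) :
    (Fin m → Polynomial ℕ) →+ (Fin n → Polynomial ℤ) where
  toFun w := ∑ i, ((w i).map (Nat.castRingHom ℤ)) • u i
  map_zero' := by simp
  map_add' a b := by
    simp only [Pi.add_apply, Polynomial.map_add, add_smul]
    exact Finset.sum_add_distrib

/-- The monomial substitution homomorphism `θ_U` with `θ_U(Y^w) = T^{∑ i, w i • u i}`. -/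
noncomputable def thetaU (k : Type*) [CommRing k] {m n : ℕ}
    (u : Fin m → Fin n → Polynomial ℤ) :
    AddMonoidAlgebra k (Fin m → Polynomial ℕ) →ₐ[k]
      AddMonoidAlgebra k (Fin n → Polynomial ℤ) :=
  AddMonoidAlgebra.mapDomainAlgHom k k (expMap u)

/-- The orthogonal complement of a `ℤ[x]`-lattice `L ⊆ ℤ[x]^m`. -/
noncomputable def orthComp {m : ℕ} (L : Submodule (Polynomial ℤ) (Fin m → Polynomial ℤ)) :
    Submodule (Polynomial ℤ) (Fin m → Polynomial ℤ) where
  carrier := {f | ∀ g ∈ L, ∑ i, f i * g i = 0}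
  zero_mem' := by intro g hg; simp
  add_mem' := by
    intro a b ha hb g hg
    simp only [Pi.add_apply, add_mul, Finset.sum_add_distrib, ha g hg, hb g hg, add_zero]
  smul_mem' := by
    intro c a ha g hg
    simp only [Pi.smul_apply, smul_eq_mul, mul_assoc, ← Finset.mul_sum, ha g hg, mul_zero]

lemma polyPos_coeff (p : Polynomial ℤ) (c : ℕ) : (polyPos p).coeff c = (p.coeff c).toNat := by
  rcases p with ⟨⟨p⟩⟩
  simp [polyPos, Polynomial.coeff]

lemma map_polyPos_sub (p : Polynomial ℤ) :
    (polyPos p).map (Nat.castRingHom ℤ) - (polyPos (-p)).map (Nat.castRingHom ℤ) = p := by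
  ext c
  simp only [Polynomial.coeff_sub, Polynomial.coeff_map, polyPos_coeff, Polynomial.coeff_neg,
    Nat.castRingHom, eq_intCast, eq_natCast, RingHom.coe_mk, MonoidHom.coe_mk, OneHom.coe_mk]
  omega

lemma key1 (p q : Polynomial ℕ) :
    polyPos (p.map (Nat.castRingHom ℤ) -
        (polyPos (p.map (Nat.castRingHom ℤ) - q.map (Nat.castRingHom ℤ))).map (Nat.castRingHom ℤ))
      + polyPos (p.map (Nat.castRingHom ℤ) - q.map (Nat.castRingHom ℤ)) = p := by
  ext c
  simp only [Polynomial.coeff_add, polyPos_coeff, Polynomial.coeff_sub, Polynomial.coeff_map]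
  simp only [Nat.castRingHom, eq_natCast, RingHom.coe_mk, MonoidHom.coe_mk, OneHom.coe_mk]
  omega

lemma key2 (p q : Polynomial ℕ) :
    polyPos (p.map (Nat.castRingHom ℤ) -
        (polyPos (p.map (Nat.castRingHom ℤ) - q.map (Nat.castRingHom ℤ))).map (Nat.castRingHom ℤ))
      + polyPos (-(p.map (Nat.castRingHom ℤ) - q.map (Nat.castRingHom ℤ))) = q := by
  ext c
  simp only [Polynomial.coeff_add, polyPos_coeff, Polynomial.coeff_sub, Polynomial.coeff_map,
    Polynomial.coeff_neg]
  simp only [Nat.castRingHom, eq_natCast, RingHom.coe_mk, MonoidHom.coe_mk, OneHom.coe_mk]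
  omega

-- kernel of mapDomain is spanned by binomials
lemma mapDomain_zero_mem_span {k : Type*} [Field k] {M N : Type*} [AddCommMonoid M]
    [AddCommMonoid N] (φ : M →+ N) :
    ∀ (nn : ℕ) (p : M →₀ k), p.support.card ≤ nn →
      Finsupp.mapDomain φ p = 0 →
      AddMonoidAlgebra.ofCoeff p ∈ Submodule.span k {q : AddMonoidAlgebra k M |
        ∃ a b, φ a = φ b ∧ q = AddMonoidAlgebra.single a 1 - AddMonoidAlgebra.single b 1} := by
  intro nn
  induction nn with
  | zero =>
    intro p hcard _
    have : p = 0 := by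
      rw [← Finsupp.support_eq_empty, ← Finset.card_eq_zero]
      omega
    simp [this]
  | succ n ih =>
    intro p hcard hp0
    classical
    by_cases hp : p = 0
    · simp [hp]
    obtain ⟨a, ha⟩ := Finset.nonempty_iff_ne_empty.mpr (fun h => hp (Finsupp.support_eq_empty.mp h))
    have hpa : p a ≠ 0 := Finsupp.mem_support_iff.mp ha
    have key : ∑ w ∈ p.support, (if φ w = φ a then p w else 0) = 0 := by
      have := congrArg (fun q => q (φ a)) hp0
      simpa [Finsupp.mapDomain, Finsupp.sum_apply, Finsupp.sum, Finsupp.single_apply] using this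
    have hex : ∃ b ∈ p.support, b ≠ a ∧ φ b = φ a := by
      by_contra h
      push_neg at h
      have : ∑ w ∈ p.support, (if φ w = φ a then p w else 0) = p a := by
        rw [Finset.sum_eq_single a]
        · simp
        · intro w hw hwa
          simp [h w hw hwa]
        · intro h'; exact absurd ha h'
      exact hpa (by rw [← this, key])
    obtain ⟨b, hb, hba, hfb⟩ := hex
    set q : M →₀ k := Finsupp.single a 1 - Finsupp.single b 1 with hq
    set p' : M →₀ k := p - p a • q with hp'
    have hsup : p'.support ⊆ p.support.erase a := by
      intro w hw
      have hw' : p' w ≠ 0 := Finsupp.mem_support_iff.mp hw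
      have hqa : q w = (if a = w then (1:k) else 0) - (if b = w then 1 else 0) := by
        rw [hq, Finsupp.sub_apply, Finsupp.single_apply, Finsupp.single_apply]
      have hval : p' w = p w - p a * q w := by
        rw [hp', Finsupp.sub_apply, Finsupp.smul_apply, smul_eq_mul]
      rw [Finset.mem_erase]
      constructor
      · rintro rfl
        apply hw'
        rw [hval, hqa, if_pos rfl, if_neg hba]
        ring
      · rw [Finsupp.mem_support_iff]
        intro hpw
        have hwa : w ≠ a := fun h => hpa (h ▸ hpw)
        by_cases hwb : w = b
        · exact absurd (hwb ▸ hpw) (Finsupp.mem_support_iff.mp hb)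
        · apply hw'
          rw [hval, hqa, hpw, if_neg (fun h => hwa h.symm), if_neg (fun h => hwb h.symm)]
          ring
    have hms : ∀ x y : M →₀ k, Finsupp.mapDomain (φ : M → N) (x - y) =
        Finsupp.mapDomain φ x - Finsupp.mapDomain φ y :=
      fun x y => map_sub (Finsupp.mapDomain.addMonoidHom (φ : M → N)) x y
    have hmdq : Finsupp.mapDomain (φ : M → N) q = 0 := by
      rw [hq, hms, Finsupp.mapDomain_single, Finsupp.mapDomain_single, hfb, sub_self]
    have hmd : Finsupp.mapDomain (φ : M → N) p' = 0 := by
      rw [hp', hms, Finsupp.mapDomain_smul, hmdq, hp0]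
      simp
    have hcard' : p'.support.card ≤ n := by
      have h1 := Finset.card_le_card hsup
      have h2 : (p.support.erase a).card < p.support.card := Finset.card_erase_lt_of_mem ha
      omega
    have hmem := ih p' hcard' hmd
    have hqmem : AddMonoidAlgebra.ofCoeff q ∈ Submodule.span k {q : AddMonoidAlgebra k M |
        ∃ a b, φ a = φ b ∧ q = AddMonoidAlgebra.single a 1 - AddMonoidAlgebra.single b 1} :=
      Submodule.subset_span ⟨a, b, hfb.symm, rfl⟩
    have : p = p' + p a • q := by rw [hp']; abel
    rw [this, AddMonoidAlgebra.ofCoeff_add, AddMonoidAlgebra.ofCoeff_smul]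
    exact Submodule.add_mem _ hmem (Submodule.smul_mem _ _ hqmem)


lemma mem_of_orth {m n : ℕ} (L : Submodule (Polynomial ℤ) (Fin m → Polynomial ℤ))
    (htoric : ∀ g : Polynomial ℤ, g ≠ 0 → ∀ w : Fin m → Polynomial ℤ, g • w ∈ L → w ∈ L)
    (v : Fin n → Fin m → Polynomial ℤ)
    (hv : Submodule.span (Polynomial ℤ) (Set.range v) = orthComp L)
    (f : Fin m → Polynomial ℤ) (hf : ∀ j, ∑ i, f i * v j i = 0) : f ∈ L := by
  classical
  let K := FractionRing (Polynomial ℤ)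
  let e : Polynomial ℤ →+* K := algebraMap (Polynomial ℤ) K
  have he : Function.Injective e := IsFractionRing.injective (Polynomial ℤ) K
  let ι : (Fin m → Polynomial ℤ) → (Fin m → K) := fun g i => e (g i)
  have hfV : ι f ∈ Submodule.span K (ι '' L) := by
    by_contra hfe
    obtain ⟨φ, hφ1, hφ2⟩ :=
      (Submodule.span K (ι '' L)).exists_dual_map_eq_bot_of_notMem hfe inferInstance
    have hφ0 : ∀ g ∈ L, φ (ι g) = 0 := by
      intro g hg
      have : φ (ι g) ∈ (Submodule.span K (ι '' L)).map φ :=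
        Submodule.mem_map_of_mem (Submodule.subset_span ⟨g, hg, rfl⟩)
      simpa [hφ2] using this
    set c : Fin m → K := fun i => φ (fun j => if i = j then 1 else 0) with hc
    have hφeq : ∀ x : Fin m → K, φ x = ∑ i, x i * c i := by
      intro x
      conv_lhs => rw [pi_eq_sum_univ x]
      rw [map_sum]
      refine Finset.sum_congr rfl fun i _ => ?_
      rw [hc, map_smul, smul_eq_mul]
    obtain ⟨d, hd⟩ := IsLocalization.exist_integer_multiples
      (nonZeroDivisors (Polynomial ℤ)) Finset.univ c
    choose g hg using fun i => hd i (Finset.mem_univ i)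
    have hdot : ∀ w : Fin m → Polynomial ℤ,
        e (∑ i, g i * w i) = e (d : Polynomial ℤ) * φ (ι w) := by
      intro w
      rw [hφeq, map_sum, Finset.mul_sum]
      refine Finset.sum_congr rfl fun i _ => ?_
      rw [map_mul, hg i, Algebra.smul_def]
      ring
    have hgL : g ∈ orthComp L := by
      intro w hw
      apply he
      rw [hdot w, hφ0 w hw, mul_zero, map_zero]
    have hgspan : g ∈ Submodule.span (Polynomial ℤ) (Set.range v) := by rw [hv]; exact hgL
    obtain ⟨p, hp⟩ := (Submodule.mem_span_range_iff_exists_fun (Polynomial ℤ)).mp hgspan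
    have hgeq : ∀ i, g i = ∑ j, p j * v j i := by
      intro i
      rw [← hp]
      simp [Finset.sum_apply]
    have hgf : ∑ i, g i * f i = 0 := by
      calc ∑ i, g i * f i = ∑ i, ∑ j, p j * (f i * v j i) := by
            refine Finset.sum_congr rfl fun i _ => ?_
            rw [hgeq i, Finset.sum_mul]
            exact Finset.sum_congr rfl fun j _ => by ring
        _ = ∑ j, p j * ∑ i, (f i * v j i) := by
            rw [Finset.sum_comm]
            exact Finset.sum_congr rfl fun j _ => by rw [Finset.mul_sum]
        _ = 0 := by simp [hf]
    have hzero : e (d : Polynomial ℤ) * φ (ι f) = 0 := by rw [← hdot f, hgf, map_zero]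
    have hd0 : e (d : Polynomial ℤ) ≠ 0 := by
      intro h
      exact nonZeroDivisors.coe_ne_zero d (he (by rw [h, map_zero]))
    rcases mul_eq_zero.mp hzero with h | h
    · exact hd0 h
    · exact hφ1 h
  obtain ⟨N, coef, gs, hsum⟩ := Submodule.mem_span_set'.mp hfV
  obtain ⟨d, hd⟩ := IsLocalization.exist_integer_multiples
    (nonZeroDivisors (Polynomial ℤ)) Finset.univ coef
  choose a ha using fun i => hd i (Finset.mem_univ i)
  choose w hw hwe using fun j : Fin N => (gs j).2
  have hmain : (d : Polynomial ℤ) • f = ∑ j, a j • w j := by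
    funext i0
    apply he
    rw [Pi.smul_apply, smul_eq_mul, map_mul]
    have h1 : e (f i0) = ∑ j, coef j * (gs j : Fin m → K) i0 := by
      have h := congrFun hsum i0
      simpa [ι, Finset.sum_apply] using h.symm
    rw [h1, Finset.mul_sum]
    have h2 : e ((∑ j, a j • w j) i0) = ∑ j, e (a j) * e (w j i0) := by
      simp [Finset.sum_apply, smul_eq_mul]
    rw [h2]
    refine Finset.sum_congr rfl fun j _ => ?_
    rw [ha j, Algebra.smul_def]
    have h3 : (gs j : Fin m → K) i0 = e (w j i0) := by
      rw [← hwe j]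
    rw [h3]
    ring
  have hdL : (d : Polynomial ℤ) • f ∈ L := by
    rw [hmain]
    exact Submodule.sum_mem _ (fun j _ => Submodule.smul_mem _ _ (hw j))
  exact htoric (d : Polynomial ℤ) (nonZeroDivisors.coe_ne_zero d) f hdL

lemma expMap_apply {m n : ℕ} (u : Fin m → Fin n → Polynomial ℤ) (w : Fin m → Polynomial ℕ)
    (j : Fin n) : expMap u w j = ∑ i, (w i).map (Nat.castRingHom ℤ) * u i j := by
  simp [expMap, Finset.sum_apply, smul_eq_mul]

lemma expMap_sub {m n : ℕ} (u : Fin m → Fin n → Polynomial ℤ) (a b : Fin m → Polynomial ℕ)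
    (j : Fin n) : expMap u a j - expMap u b j =
      ∑ i, ((a i).map (Nat.castRingHom ℤ) - (b i).map (Nat.castRingHom ℤ)) * u i j := by
  rw [expMap_apply, expMap_apply, ← Finset.sum_sub_distrib]
  exact Finset.sum_congr rfl fun i _ => by ring

/-- Lemma 4.5: if `L` is a toric `ℤ[x]`-lattice, `v 0, …, v (n-1)` generate `L^C`, and
`u j i = v i j` (the `u j` are the rows of the matrix with columns `v i`), then the kernel
of the monomial substitution homomorphism `θ_U` equals the lattice ideal `I_L`. -/
theorem kernel_thetaU_eq_lattice_ideal_of_toric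
    (k : Type*) [Field k] [CharZero k] {m n : ℕ}
    (L : Submodule (Polynomial ℤ) (Fin m → Polynomial ℤ))
    (htoric : ∀ g : Polynomial ℤ, g ≠ 0 → ∀ w : Fin m → Polynomial ℤ, g • w ∈ L → w ∈ L)
    (v : Fin n → Fin m → Polynomial ℤ)
    (hv : Submodule.span (Polynomial ℤ) (Set.range v) = orthComp L)
    (u : Fin m → Fin n → Polynomial ℤ) (hu : ∀ i j, u j i = v i j) :
    RingHom.ker (thetaU k u) =
      Ideal.span ((fun f => (AddMonoidAlgebra.single (vecPos f) 1 :
            AddMonoidAlgebra k (Fin m → Polynomial ℕ)) - AddMonoidAlgebra.single (vecNeg f) 1) ''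
        (L : Set (Fin m → Polynomial ℤ))) := by
  classical
  set S : Set (AddMonoidAlgebra k (Fin m → Polynomial ℕ)) :=
    (fun f => (AddMonoidAlgebra.single (vecPos f) 1 :
        AddMonoidAlgebra k (Fin m → Polynomial ℕ)) - AddMonoidAlgebra.single (vecNeg f) 1) ''
      (L : Set (Fin m → Polynomial ℤ)) with hS
  have hθ : ∀ (w : Fin m → Polynomial ℕ) (r : k),
      thetaU k u (AddMonoidAlgebra.single w r) = AddMonoidAlgebra.single (expMap u w) r :=
    fun w r => AddMonoidAlgebra.mapDomain_single
  have hθeq : ∀ p : AddMonoidAlgebra k (Fin m → Polynomial ℕ),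
      thetaU k u p = AddMonoidAlgebra.ofCoeff (Finsupp.mapDomain (expMap u) p.coeff) :=
      fun p => rfl
  apply le_antisymm
  · intro p hp
    have hp0 : Finsupp.mapDomain (expMap u : (Fin m → Polynomial ℕ) →+ (Fin n → Polynomial ℤ))
        p.coeff = 0 := by
      have h := RingHom.mem_ker.mp hp
      rw [hθeq] at h
      exact AddMonoidAlgebra.ofCoeff_eq_zero.mp h
    have hmem := mapDomain_zero_mem_span (k := k) (expMap u) p.coeff.support.card p.coeff le_rfl hp0
    have hle : Submodule.span k {q : AddMonoidAlgebra k (Fin m → Polynomial ℕ) |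
          ∃ a b, expMap u a = expMap u b ∧ q = AddMonoidAlgebra.single a 1 - AddMonoidAlgebra.single b 1} ≤
        (Ideal.span S).restrictScalars k := by
      rw [Submodule.span_le]
      rintro q ⟨a, b, hab, rfl⟩
      set f : Fin m → Polynomial ℤ :=
        fun i => (a i).map (Nat.castRingHom ℤ) - (b i).map (Nat.castRingHom ℤ) with hfdef
      have hfL : f ∈ L := by
        apply mem_of_orth L htoric v hv
        intro j
        have h1 : ∑ i, f i * v j i = expMap u a j - expMap u b j := by
          rw [expMap_sub]
          exact Finset.sum_congr rfl fun i _ => by rw [hu j i]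
        rw [h1, hab, sub_self]
      set g : Fin m → Polynomial ℕ :=
        fun i => polyPos ((a i).map (Nat.castRingHom ℤ) -
          ((vecPos f i).map (Nat.castRingHom ℤ))) with hgdef
      have hga : g + vecPos f = a := by
        funext i
        exact key1 (a i) (b i)
      have hgb : g + vecNeg f = b := by
        funext i
        exact key2 (a i) (b i)
      have hfact : (AddMonoidAlgebra.single a 1 : AddMonoidAlgebra k (Fin m → Polynomial ℕ)) -
          AddMonoidAlgebra.single b 1 =
          (AddMonoidAlgebra.single g 1 : AddMonoidAlgebra k (Fin m → Polynomial ℕ)) *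
            (AddMonoidAlgebra.single (vecPos f) 1 - AddMonoidAlgebra.single (vecNeg f) 1) := by
        rw [mul_sub, AddMonoidAlgebra.single_mul_single, AddMonoidAlgebra.single_mul_single,
          mul_one, hga, hgb]
      rw [SetLike.mem_coe, Submodule.restrictScalars_mem, hfact]
      have hmemS : (AddMonoidAlgebra.single (vecPos f) 1 :
          AddMonoidAlgebra k (Fin m → Polynomial ℕ)) - AddMonoidAlgebra.single (vecNeg f) 1 ∈ S :=
        ⟨f, hfL, rfl⟩
      exact Ideal.mul_mem_left _ _ (Ideal.subset_span hmemS)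
    exact hle hmem
  · rw [Ideal.span_le]
    rintro q ⟨f, hfL, rfl⟩
    rw [SetLike.mem_coe, RingHom.mem_ker]
    have key : expMap u (vecPos f) = expMap u (vecNeg f) := by
      funext j
      have hvj : v j ∈ orthComp L := by
        rw [← hv]
        exact Submodule.subset_span (Set.mem_range_self j)
      have h0 : ∑ i, (v j) i * f i = 0 := hvj f hfL
      have h1 : expMap u (vecPos f) j - expMap u (vecNeg f) j = ∑ i, f i * v j i := by
        rw [expMap_sub]
        refine Finset.sum_congr rfl fun i _ => ?_
        rw [hu j i]
        congr 1
        exact map_polyPos_sub (f i)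
      have h2 : ∑ i, f i * v j i = 0 := by
        rw [← h0]
        exact Finset.sum_congr rfl fun i _ => mul_comm _ _
      exact sub_eq_zero.mp (h1.trans h2)
    rw [map_sub, hθ, hθ, key, sub_self]
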